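/- Let α, β be real with α² + β² ≠ 1 and let A1 = (1+α, 1+β), A2 = (−1−α, 1−β), A3 = (−1+α, −1+β), A4 = (1−α, −1−β). Then the evaluation map from span{1, ξ, η, ξη} to ℝ⁴ sending a bilinear polynomial p to (p(A1), p(A2), p(A3), p(A4)) is a linear isomorphism (unisolvence of the QBL element). -/

import Mathlib

/-- The four vertices of the quadrilateral `K` in the `(ξ,η)` coordinates. -/
def qblVert (α β : ℝ) : Fin 4 → ℝ × ℝ :=
  ![(1 + α, 1 + β), (-1 - α, 1 - β), (-1 + α, -1 + β), (1 - α, -1 - β)]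

/-- Evaluation matrix. -/
def qblMat (α β : ℝ) : Matrix (Fin 4) (Fin 4) ℝ :=
  Matrix.of fun i j =>
    ![(1 : ℝ), (qblVert α β i).1, (qblVert α β i).2,
      (qblVert α β i).1 * (qblVert α β i).2] j

lemma qblMat_det (α β : ℝ) : (qblMat α β).det = -16 * (1 - α ^ 2 - β ^ 2) := by
  simp [Matrix.det_succ_row_zero, Fin.sum_univ_succ, Fin.succAbove, Fin.castSucc, Fin.castAdd, Fin.castLE, qblMat, qblVert]
  ring

/-- Unisolvence of the QBL element: the evaluation map sending the coefficient
vector `(a,b,c,d)` of the bilinear polynomial `a + bξ + cη + dξη` to its values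
at the four vertices `A_i` is a linear isomorphism (i.e. it is bijective). -/
theorem stmt_3 (α β : ℝ) (h : α ^ 2 + β ^ 2 ≠ 1) :
    ∃ L : (Fin 4 → ℝ) →ₗ[ℝ] (Fin 4 → ℝ),
      (∀ c : Fin 4 → ℝ, ∀ i : Fin 4,
        L c i = c 0 + c 1 * (qblVert α β i).1 + c 2 * (qblVert α β i).2
          + c 3 * ((qblVert α β i).1 * (qblVert α β i).2)) ∧
      Function.Bijective L := by
  have hdet : (qblMat α β).det ≠ 0 := by
    rw [qblMat_det]
    intro hc
    apply h
    nlinarith [hc]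
  have : Invertible (qblMat α β) :=
    (qblMat α β).invertibleOfIsUnitDet (isUnit_iff_ne_zero.mpr hdet)
  refine ⟨(qblMat α β).mulVecLin, fun c i => ?_, ?_⟩
  · simp [Matrix.mulVecLin_apply, Matrix.mulVec, dotProduct,
      Fin.sum_univ_four, qblMat]
    ring
  · exact (Matrix.toLinearEquiv' (qblMat α β) this).bijective
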